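/- arXiv:2508.20749 — 4 statements merged into one kernel-verified Lean document; each statement's English description precedes it below -/
import Mathlib

section
/- Let X be a binomial random variable with parameters n and 1/2, and let α, β be nonnegative integers with max(α, β) ≥ 1. Then |E[X^α (n−X)^β] − (n/2)^(α+β)| ≤ max(α, β) · n^(α+β−1/2) for all n ≥ 1. -/
open Finset

lemma varcore (n : ℕ) :
    ∑ k ∈ Finset.range (n + 1), (n.choose k : ℝ) * (2 * (k:ℝ) - (n:ℝ)) ^ 2
      = (n:ℝ) * 2 ^ n := by
  induction n with
  | zero => simp
  | succ n ih =>
    set g : ℕ → ℝ := fun k => (n.choose k : ℝ) * (2 * (k:ℝ) - ((n:ℝ)+1)) ^ 2 with hg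
    have hc : ∑ k ∈ Finset.range (n+1), (n.choose k : ℝ) = 2 ^ n := by
      have h := Nat.sum_range_choose n
      have h' : ((∑ m ∈ Finset.range (n + 1), n.choose m : ℕ) : ℝ) = ((2^n : ℕ) : ℝ) :=
        congrArg _ h
      push_cast at h'
      exact h'
    have hsplit : ∑ k ∈ Finset.range (n + 2), ((n+1).choose k : ℝ) * (2 * (k:ℝ) - ((n:ℝ)+1)) ^ 2
        = (∑ k ∈ Finset.range (n + 1), (n.choose k : ℝ) * (2 * ((k:ℝ)+1) - ((n:ℝ)+1)) ^ 2)
          + (∑ k ∈ Finset.range (n + 1), g (k+1)) + g 0 := by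
      rw [Finset.sum_range_succ' (fun k => ((n+1).choose k : ℝ) * (2 * (k:ℝ) - ((n:ℝ)+1)) ^ 2)]
      have e0 : ((n+1).choose 0 : ℝ) * (2 * ((0:ℕ):ℝ) - ((n:ℝ)+1)) ^ 2 = g 0 := by
        simp [hg]
      rw [e0, ← Finset.sum_add_distrib]
      congr 1
      refine Finset.sum_congr rfl fun k _ => ?_
      rw [Nat.choose_succ_succ]
      simp only [hg]
      push_cast
      ring
    have h2 : (∑ k ∈ Finset.range (n + 1), g (k+1)) + g 0
        = ∑ k ∈ Finset.range (n + 1), g k := by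
      rw [← Finset.sum_range_succ' g, Finset.sum_range_succ]
      simp [hg]
    have hcomb : (∑ k ∈ Finset.range (n + 1), (n.choose k : ℝ) * (2 * ((k:ℝ)+1) - ((n:ℝ)+1)) ^ 2)
          + (∑ k ∈ Finset.range (n + 1), g k)
        = 2 * (∑ k ∈ Finset.range (n + 1), (n.choose k : ℝ) * (2 * (k:ℝ) - (n:ℝ)) ^ 2)
          + 2 * (∑ k ∈ Finset.range (n + 1), (n.choose k : ℝ)) := by
      rw [Finset.mul_sum, Finset.mul_sum, ← Finset.sum_add_distrib, ← Finset.sum_add_distrib]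
      refine Finset.sum_congr rfl fun k _ => ?_
      simp only [hg]
      ring
    calc ∑ k ∈ Finset.range (n + 1 + 1), ((n + 1).choose k : ℝ) * (2 * (k:ℝ) - ((n+1:ℕ):ℝ)) ^ 2
        = (∑ k ∈ Finset.range (n + 1), (n.choose k : ℝ) * (2 * ((k:ℝ)+1) - ((n:ℝ)+1)) ^ 2)
          + ((∑ k ∈ Finset.range (n + 1), g (k+1)) + g 0) := by
          push_cast
          rw [← add_assoc, ← hsplit]
      _ = 2 * (∑ k ∈ Finset.range (n + 1), (n.choose k : ℝ) * (2 * (k:ℝ) - (n:ℝ)) ^ 2)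
          + 2 * (∑ k ∈ Finset.range (n + 1), (n.choose k : ℝ)) := by rw [h2, hcomb]
      _ = ((n+1:ℕ):ℝ) * 2 ^ (n+1) := by rw [ih, hc]; push_cast; ring

lemma powlip (a : ℕ) (x y N : ℝ) (hx0 : 0 ≤ x) (hxN : x ≤ N) (hy0 : 0 ≤ y) (hyN : y ≤ N) :
    |x ^ a - y ^ a| ≤ (a : ℝ) * N ^ (a - 1) * |x - y| := by
  rcases Nat.eq_zero_or_pos a with ha | ha
  · simp [ha]
  have hN : 0 ≤ N := le_trans hx0 hxN
  rw [← geom_sum₂_mul x y a, abs_mul]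
  have hb : |∑ i ∈ Finset.range a, x ^ i * y ^ (a - 1 - i)| ≤ (a : ℝ) * N ^ (a - 1) := by
    refine le_trans (Finset.abs_sum_le_sum_abs _ _) ?_
    have : ∀ i ∈ Finset.range a, |x ^ i * y ^ (a - 1 - i)| ≤ N ^ (a - 1) := by
      intro i hi
      rw [Finset.mem_range] at hi
      rw [abs_mul, abs_pow, abs_pow, abs_of_nonneg hx0, abs_of_nonneg hy0]
      calc x ^ i * y ^ (a - 1 - i) ≤ N ^ i * N ^ (a - 1 - i) := by
            exact mul_le_mul (pow_le_pow_left₀ hx0 hxN i) (pow_le_pow_left₀ hy0 hyN _)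
              (pow_nonneg hy0 _) (pow_nonneg hN _)
        _ = N ^ (a - 1) := by rw [← pow_add]; congr 1; omega
    calc ∑ i ∈ Finset.range a, |x ^ i * y ^ (a - 1 - i)|
        ≤ ∑ _i ∈ Finset.range a, N ^ (a - 1) := Finset.sum_le_sum this
      _ = (a : ℝ) * N ^ (a - 1) := by
          rw [Finset.sum_const, Finset.card_range, nsmul_eq_mul]
  exact mul_le_mul_of_nonneg_right hb (abs_nonneg _)

theorem binomial_half_mixed_moment_bound (n α β : ℕ) (hn : 1 ≤ n) (hαβ : 1 ≤ max α β) :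
    |(∑ k ∈ Finset.range (n + 1),
        (n.choose k : ℝ) * (1 / 2) ^ n * (k : ℝ) ^ α * ((n : ℝ) - k) ^ β)
      - ((n : ℝ) / 2) ^ (α + β)|
    ≤ (max α β : ℝ) * (n : ℝ) ^ ((α : ℝ) + (β : ℝ) - 1 / 2) := by
  have hn0 : (0:ℝ) < n := by exact_mod_cast hn
  set m : ℝ := (n:ℝ) / 2 with hm
  set p : ℕ → ℝ := fun k => (n.choose k : ℝ) * (1/2) ^ n with hp
  have hp0 : ∀ k, 0 ≤ p k := fun k => by positivity
  have hc : ∑ k ∈ Finset.range (n+1), (n.choose k : ℝ) = 2 ^ n := by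
    have h := Nat.sum_range_choose n
    have h' : ((∑ k ∈ Finset.range (n + 1), n.choose k : ℕ) : ℝ) = ((2^n : ℕ) : ℝ) :=
      congrArg _ h
    push_cast at h'
    exact h'
  have h2n : (2:ℝ) ^ n ≠ 0 := by positivity
  have h1 : ∑ k ∈ Finset.range (n+1), p k = 1 := by
    simp only [hp]
    rw [← Finset.sum_mul, hc, one_div, inv_pow, mul_inv_cancel₀ h2n]
  have hvar : ∑ k ∈ Finset.range (n+1), p k * ((k:ℝ) - m) ^ 2 = (n:ℝ) / 4 := by
    have he : ∀ k ∈ Finset.range (n+1), p k * ((k:ℝ) - m) ^ 2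
        = (1/2)^n / 4 * ((n.choose k : ℝ) * (2 * (k:ℝ) - (n:ℝ)) ^ 2) := by
      intro k _
      simp only [hp, hm]
      ring
    rw [Finset.sum_congr rfl he, ← Finset.mul_sum, varcore]
    field_simp
    rw [← mul_pow]; norm_num
  -- sum of p * |k - m| bounded via Cauchy-Schwarz
  have habs : ∑ k ∈ Finset.range (n+1), p k * |(k:ℝ) - m| ≤ Real.sqrt n / 2 := by
    set A := ∑ k ∈ Finset.range (n+1), p k * |(k:ℝ) - m| with hA
    have hA0 : 0 ≤ A := Finset.sum_nonneg fun k _ => mul_nonneg (hp0 k) (abs_nonneg _)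
    have hcs := Finset.sum_mul_sq_le_sq_mul_sq (Finset.range (n+1))
      (fun k => Real.sqrt (p k)) (fun k => Real.sqrt (p k) * |(k:ℝ) - m|)
    have e1 : ∑ k ∈ Finset.range (n+1),
        Real.sqrt (p k) * (Real.sqrt (p k) * |(k:ℝ) - m|) = A := by
      refine Finset.sum_congr rfl fun k _ => ?_
      rw [← mul_assoc, Real.mul_self_sqrt (hp0 k)]
    have e2 : ∑ k ∈ Finset.range (n+1), Real.sqrt (p k) ^ 2 = 1 := by
      rw [← h1]
      exact Finset.sum_congr rfl fun k _ => Real.sq_sqrt (hp0 k)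
    have e3 : ∑ k ∈ Finset.range (n+1), (Real.sqrt (p k) * |(k:ℝ) - m|) ^ 2 = (n:ℝ)/4 := by
      rw [← hvar]
      refine Finset.sum_congr rfl fun k _ => ?_
      rw [mul_pow, Real.sq_sqrt (hp0 k), sq_abs]
    rw [e1, e2, e3, one_mul] at hcs
    have hs := Real.sq_sqrt (le_of_lt hn0)
    nlinarith [Real.sqrt_nonneg (n:ℝ)]
  -- pointwise bound
  have hpoint : ∀ k ∈ Finset.range (n+1),
      |(k:ℝ)^α * ((n:ℝ) - k)^β - m ^ (α+β)|
        ≤ ((α:ℝ) + β) * (n:ℝ) ^ (α + β - 1) * |(k:ℝ) - m| := by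
    intro k hk
    rw [Finset.mem_range] at hk
    have hkn : (k:ℝ) ≤ n := by exact_mod_cast Nat.lt_succ_iff.mp hk
    have hk0 : (0:ℝ) ≤ k := Nat.cast_nonneg k
    have hm0 : 0 ≤ m := by rw [hm]; positivity
    have hmn : m ≤ n := by rw [hm]; linarith
    have hnk0 : (0:ℝ) ≤ (n:ℝ) - k := by linarith
    have hnkn : (n:ℝ) - k ≤ n := by linarith
    have hdecomp : (k:ℝ)^α * ((n:ℝ) - k)^β - m ^ (α+β)
        = ((k:ℝ)^α - m^α) * ((n:ℝ) - k)^β + m^α * (((n:ℝ) - k)^β - m^β) := by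
      rw [pow_add]; ring
    have hb1 := powlip α (k:ℝ) m (n:ℝ) hk0 hkn hm0 hmn
    have hb2 := powlip β ((n:ℝ) - k) m (n:ℝ) hnk0 hnkn hm0 hmn
    have habs2 : |(n:ℝ) - k - m| = |(k:ℝ) - m| := by
      rw [hm, show (n:ℝ) - k - (n:ℝ)/2 = -((k:ℝ) - (n:ℝ)/2) by ring, abs_neg]
    rw [habs2] at hb2
    have hfb : |((n:ℝ) - k)^β| ≤ (n:ℝ)^β := by
      rw [abs_of_nonneg (pow_nonneg hnk0 _)]
      exact pow_le_pow_left₀ hnk0 hnkn β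
    have hma : |m^α| ≤ (n:ℝ)^α := by
      rw [abs_of_nonneg (pow_nonneg hm0 _)]
      exact pow_le_pow_left₀ hm0 hmn α
    calc |(k:ℝ)^α * ((n:ℝ) - k)^β - m ^ (α+β)|
        ≤ |(k:ℝ)^α - m^α| * |((n:ℝ) - k)^β| + |m^α| * |((n:ℝ) - k)^β - m^β| := by
          rw [hdecomp]
          refine le_trans (abs_add_le _ _) ?_
          rw [abs_mul, abs_mul]
      _ ≤ ((α:ℝ) * (n:ℝ)^(α-1) * |(k:ℝ) - m|) * (n:ℝ)^β
          + (n:ℝ)^α * ((β:ℝ) * (n:ℝ)^(β-1) * |(k:ℝ) - m|) := by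
          gcongr
      _ ≤ ((α:ℝ) + β) * (n:ℝ) ^ (α + β - 1) * |(k:ℝ) - m| := by
          have e1 : (α:ℝ) * (n:ℝ)^(α-1) * (n:ℝ)^β ≤ (α:ℝ) * (n:ℝ)^(α+β-1) := by
            rcases Nat.eq_zero_or_pos α with h | h
            · simp [h]
            · rw [mul_assoc, ← pow_add, show α - 1 + β = α + β - 1 by omega]
          have e2 : (n:ℝ)^α * ((β:ℝ) * (n:ℝ)^(β-1)) ≤ (β:ℝ) * (n:ℝ)^(α+β-1) := by
            rcases Nat.eq_zero_or_pos β with h | h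
            · simp [h]
            · rw [mul_comm ((n:ℝ)^α), mul_assoc, ← pow_add,
                show β - 1 + α = α + β - 1 by omega]
          have ht0 : 0 ≤ |(k:ℝ) - m| := abs_nonneg _
          nlinarith [mul_le_mul_of_nonneg_right e1 ht0, mul_le_mul_of_nonneg_right e2 ht0]
  -- assemble
  have hterm : ∀ k ∈ Finset.range (n+1),
      (n.choose k : ℝ) * (1/2) ^ n * (k:ℝ) ^ α * ((n:ℝ) - k) ^ β
        = p k * ((k:ℝ)^α * ((n:ℝ) - k)^β) := fun k _ => by rw [hp]; ring
  rw [Finset.sum_congr rfl hterm]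
  have hsub : ∑ k ∈ Finset.range (n+1), p k * ((k:ℝ)^α * ((n:ℝ) - k)^β) - m ^ (α+β)
      = ∑ k ∈ Finset.range (n+1), p k * ((k:ℝ)^α * ((n:ℝ) - k)^β - m ^ (α+β)) := by
    rw [Finset.sum_congr rfl (fun k _ => mul_sub (p k) _ _), Finset.sum_sub_distrib,
      ← Finset.sum_mul, h1, one_mul]
  rw [hsub]
  calc |∑ k ∈ Finset.range (n+1), p k * ((k:ℝ)^α * ((n:ℝ) - k)^β - m ^ (α+β))|
      ≤ ∑ k ∈ Finset.range (n+1), p k * |(k:ℝ)^α * ((n:ℝ) - k)^β - m ^ (α+β)| := by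
        refine le_trans (Finset.abs_sum_le_sum_abs _ _) (Finset.sum_le_sum fun k _ => ?_)
        rw [abs_mul, abs_of_nonneg (hp0 k)]
    _ ≤ ∑ k ∈ Finset.range (n+1), p k * (((α:ℝ) + β) * (n:ℝ) ^ (α + β - 1) * |(k:ℝ) - m|) := by
        refine Finset.sum_le_sum fun k hk => mul_le_mul_of_nonneg_left (hpoint k hk) (hp0 k)
    _ = ((α:ℝ) + β) * (n:ℝ) ^ (α + β - 1)
        * ∑ k ∈ Finset.range (n+1), p k * |(k:ℝ) - m| := by
        rw [Finset.mul_sum]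
        exact Finset.sum_congr rfl fun k _ => by ring
    _ ≤ ((α:ℝ) + β) * (n:ℝ) ^ (α + β - 1) * (Real.sqrt n / 2) := by
        refine mul_le_mul_of_nonneg_left habs (by positivity)
    _ ≤ (max α β : ℝ) * (n:ℝ) ^ ((α:ℝ) + (β:ℝ) - 1/2) := by
        have hM : (α:ℝ) + β ≤ 2 * (max α β : ℝ) := by
          have : α + β ≤ 2 * max α β := by omega
          exact_mod_cast this
        have hrw : (n:ℝ) ^ (α + β - 1) * Real.sqrt n = (n:ℝ) ^ ((α:ℝ) + (β:ℝ) - 1/2) := by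
          rw [Real.sqrt_eq_rpow, ← Real.rpow_natCast (n:ℝ) (α + β - 1), ← Real.rpow_add hn0]
          congr 1
          have h1' : 1 ≤ α + β := le_trans hαβ (max_le_add_of_nonneg (Nat.zero_le _) (Nat.zero_le _))
          rw [Nat.cast_sub h1']
          push_cast
          ring
        calc ((α:ℝ) + β) * (n:ℝ) ^ (α + β - 1) * (Real.sqrt n / 2)
            = (((α:ℝ) + β) / 2) * ((n:ℝ) ^ (α + β - 1) * Real.sqrt n) := by ring
          _ ≤ (max α β : ℝ) * ((n:ℝ) ^ (α + β - 1) * Real.sqrt n) := by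
              refine mul_le_mul_of_nonneg_right (by linarith) (by positivity)
          _ = (max α β : ℝ) * (n:ℝ) ^ ((α:ℝ) + (β:ℝ) - 1/2) := by rw [hrw]
end

section
/- The function w(t) := 2 + (7 − 8 log 2)/t − (8 log t)/t − 4/t² on (1/2, 1), extended by 0 elsewhere on [0,1], satisfies sup over t ∈ [0,1] of |w(t)| = 8 log 2 − 5, attained in the limit t → 1⁻. -/
open Filter

/-- The variance-correction function `w` of the Kakutani process, extended by `0`. -/
noncomputable def wfun (t : ℝ) : ℝ :=
  if 1 / 2 < t ∧ t < 1 then 2 + (7 - 8 * Real.log 2) / t - (8 * Real.log t) / t - 4 / t ^ 2 else 0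

/-- `sinh u ≤ u * cosh u` for `u ≥ 0`. -/
lemma my_sinh_le_mul_cosh {u : ℝ} (hu : 0 ≤ u) : Real.sinh u ≤ u * Real.cosh u := by
  have hmono : MonotoneOn (fun x : ℝ => x * Real.cosh x - Real.sinh x) (Set.Ici 0) := by
    have hd : ∀ x : ℝ, HasDerivAt (fun x : ℝ => x * Real.cosh x - Real.sinh x)
        (x * Real.sinh x) x := by
      intro x
      have h1 : HasDerivAt (fun x : ℝ => x * Real.cosh x)
          (1 * Real.cosh x + x * Real.sinh x) x :=
        (hasDerivAt_id x).mul (Real.hasDerivAt_cosh x)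
      have h2 : HasDerivAt (fun x : ℝ => x * Real.cosh x - Real.sinh x)
          (1 * Real.cosh x + x * Real.sinh x - Real.cosh x) x := h1.sub (Real.hasDerivAt_sinh x)
      convert h2 using 1
      ring
    apply monotoneOn_of_deriv_nonneg (convex_Ici 0)
    · exact fun x _ => ((hd x).continuousAt).continuousWithinAt
    · exact fun x _ => ((hd x).differentiableAt).differentiableWithinAt
    · intro x hx
      rw [interior_Ici] at hx
      rw [(hd x).deriv]
      have hx0 : 0 < x := hx
      have : 0 ≤ Real.sinh x := Real.sinh_nonneg_iff.mpr hx0.le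
      positivity
  have h0 : (0 : ℝ) ∈ Set.Ici (0 : ℝ) := Set.mem_Ici.mpr (le_refl 0)
  have := hmono h0 (Set.mem_Ici.mpr hu) hu
  simpa using this

/-- Trapezoid bound: `2ab (log b - log a) ≤ b² - a²` for `0 < a ≤ b`. -/
lemma log_trap {a b : ℝ} (ha : 0 < a) (hab : a ≤ b) :
    2 * a * b * (Real.log b - Real.log a) ≤ b ^ 2 - a ^ 2 := by
  have hb : 0 < b := lt_of_lt_of_le ha hab
  have hlog : 0 ≤ Real.log (b / a) := Real.log_nonneg ((one_le_div ha).mpr hab)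
  have h := Real.self_le_sinh_iff.mpr hlog
  rw [Real.sinh_log (by positivity)] at h
  rw [Real.log_div hb.ne' ha.ne'] at h
  have hinv : (b / a)⁻¹ = a / b := by
    rw [inv_div]
  rw [hinv] at h
  -- h : log b - log a ≤ (b/a - a/b)/2
  have h2 := mul_le_mul_of_nonneg_left h (by positivity : (0:ℝ) ≤ 2 * a * b)
  calc 2 * a * b * (Real.log b - Real.log a) ≤ 2 * a * b * ((b / a - a / b) / 2) := h2
    _ = b ^ 2 - a ^ 2 := by field_simp

/-- Midpoint bound: `2(b - a) ≤ (a + b)(log b - log a)` for `0 < a ≤ b`. -/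
lemma log_mid {a b : ℝ} (ha : 0 < a) (hab : a ≤ b) :
    2 * (b - a) ≤ (a + b) * (Real.log b - Real.log a) := by
  have hb : 0 < b := lt_of_lt_of_le ha hab
  set s := Real.sqrt (b / a) with hs
  have hs0 : 0 < s := Real.sqrt_pos.mpr (by positivity)
  have hs1 : 1 ≤ s := by
    rw [hs, show (1:ℝ) = Real.sqrt 1 by simp]
    exact Real.sqrt_le_sqrt ((one_le_div ha).mpr hab)
  have hlogs : 0 ≤ Real.log s := Real.log_nonneg hs1
  have hsq : s ^ 2 = b / a := Real.sq_sqrt (by positivity)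
  have hkey := my_sinh_le_mul_cosh hlogs
  rw [Real.sinh_log hs0, Real.cosh_log hs0] at hkey
  -- (s - s⁻¹)/2 ≤ log s * ((s + s⁻¹)/2)
  have hlogsb : 2 * Real.log s = Real.log b - Real.log a := by
    have : Real.log (b / a) = Real.log (s ^ 2) := by rw [hsq]
    rw [Real.log_div hb.ne' ha.ne', Real.log_pow] at this
    push_cast at this
    linarith
  -- multiply hkey by 2s > 0 : s² - 1 ≤ log s * (s² + 1)
  have hkey2 : s ^ 2 - 1 ≤ Real.log s * (s ^ 2 + 1) := by
    have h2 := mul_le_mul_of_nonneg_left hkey (by positivity : (0:ℝ) ≤ 2 * s)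
    have e1 : 2 * s * ((s - s⁻¹) / 2) = s ^ 2 - 1 := by field_simp
    have e2 : 2 * s * (Real.log s * ((s + s⁻¹) / 2)) = Real.log s * (s ^ 2 + 1) := by
      field_simp
    rw [e1, e2] at h2
    exact h2
  -- s² = b/a ; multiply through by a > 0
  have hfin : b - a ≤ Real.log s * (b + a) := by
    have h3 := mul_le_mul_of_nonneg_left hkey2 ha.le
    rw [hsq] at h3
    have e1 : a * (b / a - 1) = b - a := by field_simp
    have e2 : a * (Real.log s * (b / a + 1)) = Real.log s * (b + a) := by
      field_simp
    rw [e1, e2] at h3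
    exact h3
  nlinarith [hfin, hlogsb]

/-- Numeric bounds on `log 2`. -/
lemma L_bounds : 0.6931 < Real.log 2 ∧ Real.log 2 < 0.6932 := by
  constructor
  · linarith [Real.log_two_gt_d9]
  · linarith [Real.log_two_lt_d9]

/-- Lower bound for `w` on `(1/2, 1)` : `w t ≥ -(8 log 2 - 5)`. -/
lemma w_lower {t : ℝ} (h1 : 1/2 < t) (h2 : t < 1) :
    -(8 * Real.log 2 - 5) ≤ 2 + (7 - 8 * Real.log 2) / t - (8 * Real.log t) / t - 4 / t ^ 2 := by
  set L := Real.log 2 with hL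
  obtain ⟨hL1, hL2⟩ := L_bounds
  have ht0 : 0 < t := by linarith
  -- midpoint bound for log t (with b = 1): (t+1) * log t ≤ 2*(t-1)
  have hup : (t + 1) * Real.log t ≤ 2 * (t - 1) := by
    have h := log_mid ht0 h2.le
    rw [Real.log_one] at h
    nlinarith [h]
  -- q(t) ≤ 0
  have hq : (8*L-3)*t^2 + (8*L-15)*t + 4 ≤ 0 := by
    nlinarith [sq_nonneg (t - 1/2), mul_nonneg (by linarith : (0:ℝ) ≤ t - 1/2) (by linarith : (0:ℝ) ≤ 1 - t)]
  have hkeyA : 0 ≤ (1-t) * (-((8*L-3)*t^2 + (8*L-15)*t + 4)) :=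
    mul_nonneg (by linarith) (by linarith)
  have hmul : 8*t*((t+1)*Real.log t) ≤ 8*t*(2*(t-1)) :=
    mul_le_mul_of_nonneg_left hup (by positivity)
  have hF : 0 ≤ ((8*L-3)*t^2 + (7-8*L)*t - 4 - 8*t*Real.log t) * (t+1) := by
    nlinarith [hkeyA, hmul]
  have hFpos : 0 ≤ (8*L-3)*t^2 + (7-8*L)*t - 4 - 8*t*Real.log t := by
    by_contra hcon
    push_neg at hcon
    nlinarith [hF]
  have hiden : 2 + (7 - 8*L) / t - (8*Real.log t) / t - 4 / t ^ 2 + (8*L - 5)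
      = ((8*L-3)*t^2 + (7-8*L)*t - 4 - 8*t*Real.log t) / t^2 := by
    field_simp
    ring
  have : 0 ≤ 2 + (7 - 8*L) / t - (8*Real.log t) / t - 4 / t ^ 2 + (8*L - 5) := by
    rw [hiden]
    positivity
  linarith

/-- Upper bound for `w` on `(1/2, 1)` : `w t ≤ 8 log 2 - 5`. -/
lemma w_upper {t : ℝ} (h1 : 1/2 < t) (h2 : t < 1) :
    2 + (7 - 8 * Real.log 2) / t - (8 * Real.log t) / t - 4 / t ^ 2 ≤ 8 * Real.log 2 - 5 := by
  set L := Real.log 2 with hL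
  obtain ⟨hL1, hL2⟩ := L_bounds
  have ht0 : 0 < t := by linarith
  have htr1 := log_trap ht0 (show t ≤ (t+1)/2 by linarith)
  have htr2 := log_trap (show (0:ℝ) < (t+1)/2 by linarith) (show (t+1)/2 ≤ 1 by linarith)
  rw [Real.log_one] at htr2
  -- lower bound: 4t(t+1) log t ≥ t(t+1)² - 4t - (t+1)² + 4t²
  have hlow : t*(t+1)^2 - 4*t - (t+1)^2 + 4*t^2 ≤ 4*t*(t+1)*Real.log t := by
    nlinarith [htr1, htr2, mul_le_mul_of_nonneg_left htr2 ht0.le]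
  -- quadratic factor nonneg
  have hquad : 0 ≤ (8*L-5)*t^2 + (20*L-6.5)*t + 18*L-16.25 := by
    nlinarith [mul_nonneg (by linarith : (0:ℝ) ≤ t - 1/2) (by linarith : (0:ℝ) ≤ t + 1/2)]
  have hkeyB : 0 ≤ (8*L-5)*t^3 + (16*L-4)*t^2 + (8*L-13)*t + 2 := by
    nlinarith [mul_nonneg (by linarith : (0:ℝ) ≤ t - 1/2) hquad]
  have hG : 0 ≤ ((8*L-7)*t^2 + (8*L-7)*t + 8*t*Real.log t + 4) * (t+1) := by
    nlinarith [hkeyB, mul_le_mul_of_nonneg_left hlow (by positivity : (0:ℝ) ≤ 2)]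
  have hGpos : 0 ≤ (8*L-7)*t^2 + (8*L-7)*t + 8*t*Real.log t + 4 := by
    by_contra hcon
    push_neg at hcon
    nlinarith [hG]
  have hiden : (8*L - 5) - (2 + (7 - 8*L) / t - (8*Real.log t) / t - 4 / t ^ 2)
      = ((8*L-7)*t^2 + (8*L-7)*t + 8*t*Real.log t + 4) / t^2 := by
    field_simp
    ring
  have : 0 ≤ (8*L - 5) - (2 + (7 - 8*L) / t - (8*Real.log t) / t - 4 / t ^ 2) := by
    rw [hiden]
    positivity
  linarith

lemma abs_w_le {t : ℝ} : |wfun t| ≤ 8 * Real.log 2 - 5 := by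
  obtain ⟨hL1, hL2⟩ := L_bounds
  rw [wfun]
  by_cases h : 1/2 < t ∧ t < 1
  · rw [if_pos h, abs_le]
    exact ⟨w_lower h.1 h.2, w_upper h.1 h.2⟩
  · rw [if_neg h]
    rw [abs_zero]
    linarith

lemma w_tendsto :
    Tendsto wfun (nhdsWithin 1 (Set.Iio 1)) (nhds (-(8 * Real.log 2 - 5))) := by
  have hc : ContinuousAt (fun t : ℝ => 2 + (7 - 8 * Real.log 2) / t - (8 * Real.log t) / t
      - 4 / t ^ 2) 1 := by
    have h1 : (1:ℝ) ≠ 0 := one_ne_zero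
    apply ContinuousAt.sub
    apply ContinuousAt.sub
    apply ContinuousAt.add continuousAt_const
    · exact continuousAt_const.div continuousAt_id h1
    · exact (continuousAt_const.mul (Real.continuousAt_log h1)).div continuousAt_id h1
    · exact continuousAt_const.div (continuousAt_id.pow 2) (by norm_num)
  have hval : (fun t : ℝ => 2 + (7 - 8 * Real.log 2) / t - (8 * Real.log t) / t - 4 / t ^ 2) 1
      = -(8 * Real.log 2 - 5) := by
    simp [Real.log_one]
    ring
  have htend : Tendsto (fun t : ℝ => 2 + (7 - 8 * Real.log 2) / t - (8 * Real.log t) / t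
      - 4 / t ^ 2) (nhdsWithin 1 (Set.Iio 1)) (nhds (-(8 * Real.log 2 - 5))) := by
    rw [← hval]
    exact (hc.tendsto).mono_left nhdsWithin_le_nhds
  apply Tendsto.congr' _ htend
  have hmem : Set.Ioo (1/2 : ℝ) 1 ∈ nhdsWithin 1 (Set.Iio 1) := by
    have h1 : Set.Ioi (1/2 : ℝ) ∈ nhds (1:ℝ) := isOpen_Ioi.mem_nhds (by norm_num)
    have := inter_mem_nhdsWithin (Set.Iio (1:ℝ)) h1
    rwa [Set.inter_comm, Set.Ioi_inter_Iio] at this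
  filter_upwards [hmem] with t ht
  rw [wfun, if_pos ⟨ht.1, ht.2⟩]

theorem sup_abs_w_eq :
    IsLUB ((fun t => |wfun t|) '' Set.Icc (0 : ℝ) 1) (8 * Real.log 2 - 5) ∧
    Tendsto wfun (nhdsWithin 1 (Set.Iio 1)) (nhds (-(8 * Real.log 2 - 5))) := by
  obtain ⟨hL1, hL2⟩ := L_bounds
  refine ⟨⟨?_, ?_⟩, w_tendsto⟩
  · rintro y ⟨t, _, rfl⟩
    exact abs_w_le
  · intro b hb
    have habs : Tendsto (fun t => |wfun t|) (nhdsWithin 1 (Set.Iio 1))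
        (nhds (8 * Real.log 2 - 5)) := by
      have := w_tendsto.abs
      rwa [abs_neg, abs_of_nonneg (by linarith)] at this
    apply le_of_tendsto habs
    have h1 : Set.Ioi (0 : ℝ) ∈ nhds (1:ℝ) := isOpen_Ioi.mem_nhds (by norm_num)
    have hmem : Set.Ioo (0 : ℝ) 1 ∈ nhdsWithin 1 (Set.Iio 1) := by
      have := inter_mem_nhdsWithin (Set.Iio (1:ℝ)) h1
      rwa [Set.inter_comm, Set.Ioi_inter_Iio] at this
    filter_upwards [hmem] with t ht
    exact hb ⟨t, ⟨ht.1.le, ht.2.le⟩, rfl⟩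
end

section
/- Let K and Z be nonnegative-integer-valued random variables and let Y be a mixed Poisson random variable whose (random) parameter Λ satisfies Λ ≥ 0 a.s. If Z ~ Poisson(λ) for a constant λ > 0, then the total variation distance between Y and Z satisfies d_TV(Y, Z) ≤ min(1, √(2/λ)·(1/√2)) · E|Λ − λ|; in particular d_TV(Y, Z) ≤ min(1, 1/√λ) · E|Λ − λ|. -/
open MeasureTheory ProbabilityTheory

namespace MixedPoissonTV

noncomputable def pp (t : ℝ) (k : ℕ) : ℝ := Real.exp (-t) * t ^ k / (Nat.factorial k : ℝ)

lemma pp_nonneg {t : ℝ} (ht : 0 ≤ t) (k : ℕ) : 0 ≤ pp t k := by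
  unfold pp; positivity

lemma summable_pp (t : ℝ) : Summable (fun k => pp t k) := by
  unfold pp
  simp_rw [mul_div_assoc]
  exact (Real.summable_pow_div_factorial t).mul_left _

lemma hasSum_pp {t : ℝ} (ht : 0 ≤ t) : HasSum (pp t) 1 := by
  have h := ProbabilityTheory.poissonPMFRealSum t.toNNReal
  unfold ProbabilityTheory.poissonPMFReal at h
  have h' : HasSum (fun n : ℕ => Real.exp (-t) * t ^ n / (n.factorial : ℝ)) 1 := by
    simpa [Real.coe_toNNReal t ht] using h
  exact h'

lemma pp_le_one {t : ℝ} (ht : 0 ≤ t) (k : ℕ) : pp t k ≤ 1 :=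
  le_hasSum (hasSum_pp ht) k (fun j _ => pp_nonneg ht j)

noncomputable def qq (t : ℝ) : ℕ → ℝ
  | 0 => 0
  | (j+1) => pp t j

lemma summable_qq (t : ℝ) : Summable (qq t) := by
  rw [← summable_nat_add_iff 1]
  exact summable_pp t

noncomputable def dd (t : ℝ) (k : ℕ) : ℝ := qq t k - pp t k

lemma summable_dd (t : ℝ) : Summable (dd t) :=
  (summable_qq t).sub (summable_pp t)

lemma continuous_pp (k : ℕ) : Continuous (fun t => pp t k) := by
  unfold pp; fun_prop

lemma continuous_dd (k : ℕ) : Continuous (fun t => dd t k) := by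
  unfold dd
  cases k with
  | zero =>
    show Continuous fun t : ℝ => qq t 0 - pp t 0
    simp only [qq]
    exact continuous_const.sub (continuous_pp 0)
  | succ j => exact (continuous_pp j).sub (continuous_pp (j+1))

lemma hasDerivAt_pp (k : ℕ) (t : ℝ) : HasDerivAt (fun s => pp s k) (dd t k) t := by
  have h1 : HasDerivAt (fun s : ℝ => Real.exp (-s)) (-Real.exp (-t)) t := by
    simpa [Function.comp_def] using (Real.hasDerivAt_exp (-t)).comp t (hasDerivAt_neg t)
  have h2 : HasDerivAt (fun s : ℝ => s ^ k) ((k : ℝ) * t ^ (k - 1)) t := hasDerivAt_pow k t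
  have h3 := (h1.mul h2).div_const (Nat.factorial k : ℝ)
  have h4 : HasDerivAt (fun s => pp s k)
      ((-Real.exp (-t) * t ^ k + Real.exp (-t) * (↑k * t ^ (k - 1))) / ↑k.factorial) t := h3
  convert h4 using 1
  cases k with
  | zero => simp [dd, qq, pp]
  | succ j =>
    have hfac : ((Nat.factorial (j+1) : ℝ)) = (j+1) * (Nat.factorial j : ℝ) := by
      push_cast [Nat.factorial_succ]; ring
    simp only [dd, qq, pp, hfac, Nat.add_sub_cancel, Nat.cast_add, Nat.cast_one]
    have hj : (0:ℝ) < (Nat.factorial j : ℝ) := by positivity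
    field_simp
    ring

/-! ### mode bound -/

lemma log_one_add_le {u : ℝ} (h0 : 0 ≤ u) (h1 : u ≤ 1/2) :
    Real.log (1 + u) ≤ u - u^2/6 := by
  have hx : 0 ≤ u - u^2/6 := by nlinarith
  have h3 := Real.sum_le_exp_of_nonneg hx 3
  have hsum : (1:ℝ) + (u - u^2/6) + (u - u^2/6)^2/2 ≤ Real.exp (u - u^2/6) := by
    have : ∑ i ∈ Finset.range 3, (u - u^2/6)^i / (Nat.factorial i : ℝ)
        = 1 + (u - u^2/6) + (u - u^2/6)^2/2 := by
      rw [Finset.sum_range_succ, Finset.sum_range_succ, Finset.sum_range_one]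
      norm_num [Nat.factorial]
    linarith [this ▸ h3]
  have h2 : (1:ℝ) + u ≤ Real.exp (u - u^2/6) := by nlinarith
  calc Real.log (1+u) ≤ Real.log (Real.exp (u - u^2/6)) := by
        apply Real.log_le_log (by linarith) h2
    _ = u - u^2/6 := Real.log_exp _

lemma stirling_lower (m : ℕ) (hm : 1 ≤ m) :
    Real.sqrt Real.pi * (Real.sqrt (2*m) * ((m:ℝ)/Real.exp 1)^m) ≤ (Nat.factorial m : ℝ) := by
  obtain ⟨n, rfl⟩ := Nat.exists_eq_add_of_le hm
  have h1 : Real.sqrt Real.pi ≤ Stirling.stirlingSeq (1 + n) := by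
    have ha : Antitone (Stirling.stirlingSeq ∘ Nat.succ) := Stirling.stirlingSeq'_antitone
    have ht : Filter.Tendsto (Stirling.stirlingSeq ∘ Nat.succ) Filter.atTop
        (nhds (Real.sqrt Real.pi)) :=
      Stirling.tendsto_stirlingSeq_sqrt_pi.comp (Filter.tendsto_add_atTop_nat 1)
    have := ha.le_of_tendsto ht n
    simpa [Nat.succ_eq_add_one, Nat.add_comm] using this
  have hpos : 0 < Real.sqrt (2*(1+n : ℕ)) * (((1+n : ℕ):ℝ)/Real.exp 1)^(1+n) := by
    have : (0:ℝ) < ((1+n : ℕ):ℝ) := by positivity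
    positivity
  rw [Stirling.stirlingSeq] at h1
  calc Real.sqrt Real.pi * (Real.sqrt (2*(1+n:ℕ)) * (((1+n:ℕ):ℝ)/Real.exp 1)^(1+n))
      ≤ ((Nat.factorial (1+n) : ℝ) / (Real.sqrt (2*(1+n:ℕ)) * (((1+n:ℕ):ℝ)/Real.exp 1)^(1+n)))
        * (Real.sqrt (2*(1+n:ℕ)) * (((1+n:ℕ):ℝ)/Real.exp 1)^(1+n)) := by
        apply mul_le_mul_of_nonneg_right _ hpos.le
        exact h1
    _ = (Nat.factorial (1+n) : ℝ) := by field_simp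

lemma two_sqrt_le_exp {t : ℝ} (ht : 0 ≤ t) : 2 * Real.sqrt t ≤ Real.exp t := by
  have hs := Real.sq_sqrt ht
  have h1 : 2 * Real.sqrt t ≤ 1 + t := by
    nlinarith [sq_nonneg (Real.sqrt t - 1)]
  linarith [Real.add_one_le_exp t]

lemma mode_bound_one {t : ℝ} (h1 : 1 ≤ t) (h2 : t ≤ 2) :
    2 * Real.sqrt t * t ≤ Real.exp t := by
  have ht : (0:ℝ) ≤ t := by linarith
  have hs := Real.sq_sqrt ht
  have hs1 : 1 ≤ Real.sqrt t := by
    nlinarith [Real.sqrt_nonneg t]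
  have hexp := Real.sum_le_exp_of_nonneg ht 4
  have hsum : (1:ℝ) + t + t^2/2 + t^3/6 ≤ Real.exp t := by
    have : ∑ i ∈ Finset.range 4, t^i / (Nat.factorial i : ℝ)
        = 1 + t + t^2/2 + t^3/6 := by
      rw [Finset.sum_range_succ, Finset.sum_range_succ, Finset.sum_range_succ,
        Finset.sum_range_one]
      norm_num [Nat.factorial]
    linarith [this ▸ hexp]
  nlinarith [sq_nonneg (Real.sqrt t - 1), sq_nonneg (t - Real.sqrt t),
    sq_nonneg (t*Real.sqrt t - t), sq_nonneg (t - 1), Real.sqrt_nonneg t,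
    sq_nonneg (t*Real.sqrt t - 2*t + Real.sqrt t)]

lemma mode_bound_big {t : ℝ} {m : ℕ} (hm2 : 2 ≤ m) (hmle : (m:ℝ) ≤ t)
    (hlt : t < m + 1) : 2 * Real.sqrt t * Real.exp (-t) * t^m ≤ (Nat.factorial m : ℝ) := by
  have hmpos : (0:ℝ) < m := by positivity
  have ht : (0:ℝ) < t := lt_of_lt_of_le hmpos hmle
  set u : ℝ := t/m - 1 with hu
  have hu0 : 0 ≤ u := by
    rw [hu]
    have : (1:ℝ) ≤ t/m := (one_le_div hmpos).mpr hmle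
    linarith
  have hmu : m * u = t - m := by rw [hu]; field_simp
  have hum1 : m * u ≤ 1 := by rw [hmu]; linarith
  have hm2' : (2:ℝ) ≤ m := by exact_mod_cast hm2
  have hu12 : u ≤ 1/2 := by
    rw [hu, sub_le_iff_le_add, div_le_iff₀ hmpos]
    linarith
  -- logarithmic bound
  have hlog1 : Real.log t - Real.log m ≤ u - u^2/6 := by
    have : Real.log t - Real.log m = Real.log (1 + u) := by
      rw [← Real.log_div ht.ne' hmpos.ne']
      congr 1
      field_simp [hu]
      linarith [hmu]
    rw [this]
    exact log_one_add_le hu0 hu12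
  have hquad : (m + 1/2) * (u - u^2/6) - m * u ≤ 1/6 := by
    nlinarith [mul_nonneg hu0 hu0, mul_nonneg (mul_nonneg hu0 hu0) hu0,
      mul_nonneg (sub_nonneg.mpr hum1) hu0, sq_nonneg (1 - 2*u), mul_nonneg hu0 (sub_nonneg.mpr hu12)]
  have hpi : (1:ℝ)/3 ≤ Real.log Real.pi - Real.log 2 := by
    have hexp13 : Real.exp (1/3) ≤ 3/2 := by
      have h := Real.add_one_le_exp (-(1/3) : ℝ)
      have h2 : (2/3 : ℝ) ≤ (Real.exp ((1:ℝ)/3))⁻¹ := by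
        rw [← Real.exp_neg]; linarith
      have h3 := (inv_anti₀ (by norm_num) h2)
      simpa using h3
    have hpi2 : Real.exp (1/3) ≤ Real.pi / 2 := by
      have := Real.pi_gt_three
      linarith
    have := (Real.le_log_iff_exp_le (by positivity : (0:ℝ) < Real.pi / 2)).mpr hpi2
    rwa [Real.log_div Real.pi_ne_zero (by norm_num)] at this
  -- Stirling
  have hstir := stirling_lower m (le_trans one_le_two hm2)
  -- compare with the Stirling expression via logs
  have hL : (0:ℝ) < 2 * Real.sqrt t * Real.exp (-t) * t^m := by positivity
  have hR : (0:ℝ) < Real.sqrt Real.pi * (Real.sqrt (2*m) * ((m:ℝ)/Real.exp 1)^m) := by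
    positivity
  have hlogle : Real.log (2 * Real.sqrt t * Real.exp (-t) * t^m)
      ≤ Real.log (Real.sqrt Real.pi * (Real.sqrt (2*m) * ((m:ℝ)/Real.exp 1)^m)) := by
    have hlogL : Real.log (2 * Real.sqrt t * Real.exp (-t) * t^m)
        = Real.log 2 + Real.log t / 2 + (-t) + m * Real.log t := by
      rw [Real.log_mul (by positivity) (by positivity), Real.log_mul (by positivity)
        (Real.exp_ne_zero _), Real.log_mul (by norm_num) (by positivity),
        Real.log_exp, Real.log_sqrt ht.le, Real.log_pow]
    have hlogR : Real.log (Real.sqrt Real.pi * (Real.sqrt (2*m) * ((m:ℝ)/Real.exp 1)^m))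
        = Real.log Real.pi / 2 + (Real.log 2 + Real.log m)/2 + m * (Real.log m - 1) := by
      rw [Real.log_mul (by positivity) (by positivity), Real.log_mul (by positivity)
        (by positivity), Real.log_sqrt Real.pi_pos.le, Real.log_sqrt (by positivity),
        Real.log_pow, Real.log_mul (by norm_num) (by positivity),
        Real.log_div hmpos.ne' (Real.exp_ne_zero _), Real.log_exp]
      ring
    rw [hlogL, hlogR]
    have hmul : ((m:ℝ) + 1/2) * (Real.log t - Real.log m) ≤ ((m:ℝ) + 1/2) * (u - u^2/6) :=
      mul_le_mul_of_nonneg_left hlog1 (by positivity)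
    have hkey : ((m:ℝ) + 1/2) * (Real.log t - Real.log ↑m) ≤ 1/6 + (t - ↑m) := by
      calc ((m:ℝ) + 1/2) * (Real.log t - Real.log ↑m) ≤ ((m:ℝ) + 1/2) * (u - u^2/6) := hmul
        _ ≤ 1/6 + ↑m * u := by linarith [hquad]
        _ = 1/6 + (t - ↑m) := by rw [hmu]
    have hexpand : ((m:ℝ) + 1/2) * (Real.log t - Real.log ↑m)
        = ↑m * Real.log t + Real.log t/2 - ↑m * Real.log ↑m - Real.log ↑m / 2 := by ring
    rw [hexpand] at hkey
    linarith [hkey, hpi]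
  have := (Real.log_le_log_iff hL hR).mp hlogle
  linarith [hstir, this]

lemma pp_floor_le {t : ℝ} (ht : 0 < t) : pp t (Nat.floor t) ≤ 1 / (2 * Real.sqrt t) := by
  set m := Nat.floor t with hm
  have hmle : (m:ℝ) ≤ t := Nat.floor_le ht.le
  have hlt : t < m + 1 := Nat.lt_floor_add_one t
  have hsp : 0 < Real.sqrt t := Real.sqrt_pos.mpr ht
  have hfac : (0:ℝ) < (Nat.factorial m : ℝ) := by positivity
  rw [pp, div_le_div_iff₀ (by positivity) (by positivity)]
  -- goal : exp(-t) * t^m * (2 * √t) ≤ 1 * m !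
  rw [one_mul]
  have hmain : 2 * Real.sqrt t * Real.exp (-t) * t^m ≤ (Nat.factorial m : ℝ) := by
    match m, hm with
    | 0, hm =>
      have h2 : 2 * Real.sqrt t ≤ Real.exp t := two_sqrt_le_exp ht.le
      have : 2 * Real.sqrt t * Real.exp (-t) * t^0 = (2 * Real.sqrt t) * Real.exp (-t) := by ring
      rw [this]
      calc (2 * Real.sqrt t) * Real.exp (-t) ≤ Real.exp t * Real.exp (-t) :=
            mul_le_mul_of_nonneg_right h2 (Real.exp_pos _).le
        _ = 1 := by rw [← Real.exp_add]; simp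
        _ ≤ (Nat.factorial 0 : ℝ) := by simp
    | 1, hm =>
      have h1 : (1:ℝ) ≤ t := by exact_mod_cast hmle
      have h2 : t ≤ 2 := by
        have : t < (1:ℕ) + 1 := hlt
        push_cast at this; linarith
      have h3 := mode_bound_one h1 h2
      have : 2 * Real.sqrt t * Real.exp (-t) * t^1 = (2 * Real.sqrt t * t) * Real.exp (-t) := by
        ring
      rw [this]
      calc (2 * Real.sqrt t * t) * Real.exp (-t) ≤ Real.exp t * Real.exp (-t) :=
            mul_le_mul_of_nonneg_right h3 (Real.exp_pos _).le
        _ = 1 := by rw [← Real.exp_add]; simp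
        _ ≤ (Nat.factorial 1 : ℝ) := by simp
    | (j+2), hm =>
      exact mode_bound_big (by omega) hmle (by push_cast at hlt ⊢; linarith)
  calc Real.exp (-t) * t^m * (2 * Real.sqrt t) = 2 * Real.sqrt t * Real.exp (-t) * t^m := by ring
    _ ≤ (Nat.factorial m : ℝ) := hmain

lemma pp_succ (t : ℝ) (j : ℕ) : pp t (j+1) = pp t j * (t / (j+1)) := by
  have h1 : ((j:ℝ)+1) ≠ 0 := by positivity
  have hfac : ((Nat.factorial (j+1) : ℝ)) = ((j:ℝ)+1) * (Nat.factorial j : ℝ) := by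
    push_cast [Nat.factorial_succ]; ring
  rw [pp, pp, hfac]
  have hj : ((Nat.factorial j : ℝ)) ≠ 0 := by positivity
  field_simp
  ring

lemma pp_mono_up {t : ℝ} (ht : 0 ≤ t) {j : ℕ} (h : (j:ℝ) + 1 ≤ t) :
    pp t j ≤ pp t (j+1) := by
  rw [pp_succ]
  have h1 : (1:ℝ) ≤ t / (j+1) := by
    rw [le_div_iff₀ (by positivity)]
    linarith
  nlinarith [pp_nonneg ht j]

lemma pp_mono_down {t : ℝ} (ht : 0 ≤ t) {j : ℕ} (h : t ≤ (j:ℝ) + 1) :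
    pp t (j+1) ≤ pp t j := by
  rw [pp_succ]
  have h1 : t / ((j:ℝ)+1) ≤ 1 := by
    rw [div_le_one (by positivity)]
    linarith
  nlinarith [pp_nonneg ht j]

lemma tendsto_pp_shift (t : ℝ) (m : ℕ) :
    Filter.Tendsto (fun n => pp t (m + n)) Filter.atTop (nhds 0) := by
  have h := ((summable_pp t).tendsto_atTop_zero).comp (Filter.tendsto_add_atTop_nat m)
  simpa [Function.comp_def, Nat.add_comm] using h

lemma hasSum_tail (t : ℝ) (m : ℕ) :
    HasSum (fun j => pp t (m + j) - pp t (m + j + 1)) (pp t m) := by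
  have hsum : Summable (fun j => pp t (m + j) - pp t (m + j + 1)) := by
    apply Summable.sub
    · exact ((summable_pp t).comp_injective (add_right_injective m))
    · exact ((summable_pp t).comp_injective
        (Function.Injective.comp (add_left_injective 1) (add_right_injective m)))
  have hps : ∀ n, ∑ j ∈ Finset.range n, (pp t (m + j) - pp t (m + j + 1))
      = pp t m - pp t (m + n) := by
    intro n
    have := Finset.sum_range_sub' (f := fun j => pp t (m + j)) (n := n)
    simpa [add_assoc] using this
  have htend : Filter.Tendsto (fun n => ∑ j ∈ Finset.range n, (pp t (m + j) - pp t (m + j + 1)))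
      Filter.atTop (nhds (pp t m)) := by
    simp_rw [hps]
    have := (tendsto_pp_shift t m).const_sub (pp t m)
    simpa using this
  have h2 := hsum.hasSum.tendsto_sum_nat
  have : ∑' j, (pp t (m + j) - pp t (m + j + 1)) = pp t m :=
    tendsto_nhds_unique h2 htend
  exact this ▸ hsum.hasSum

lemma hasSum_tail_ite (t : ℝ) (m : ℕ) :
    HasSum (fun k => if m + 1 ≤ k then dd t k else 0) (pp t m) := by
  set g : ℕ → ℝ := fun k => if m + 1 ≤ k then dd t k else 0 with hg
  have h1 : HasSum (fun j => g (j + (m+1))) (pp t m) := by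
    have heq : (fun j => g (j + (m+1))) = fun j => pp t (m + j) - pp t (m + j + 1) := by
      funext j
      have hj : m + 1 ≤ j + (m + 1) := by omega
      have hidx : j + (m + 1) = (m + j) + 1 := by omega
      simp only [hg, hidx]
      rw [if_pos (by omega : m + 1 ≤ m + j + 1)]
      simp [dd, qq]
    rw [heq]
    exact hasSum_tail t m
  have h2 := (hasSum_nat_add_iff (f := g) (m+1)).mp h1
  have h3 : ∑ i ∈ Finset.range (m+1), g i = 0 := by
    apply Finset.sum_eq_zero
    intro i hi
    simp only [hg]
    rw [if_neg]
    simp at hi; omega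
  rwa [h3, add_zero] at h2

lemma sum_head (t : ℝ) (m : ℕ) :
    ∑ k ∈ Finset.range (m+1), (-(dd t k)) = pp t m := by
  rw [Finset.sum_range_succ']
  have h1 : ∀ i, -(dd t (i+1)) = pp t (i+1) - pp t i := by
    intro i; simp [dd, qq]
  have h2 : -(dd t 0) = pp t 0 := by simp [dd, qq]
  rw [h2]
  simp_rw [h1]
  rw [Finset.sum_range_sub (f := fun i => pp t i)]
  ring

lemma abs_tsum_dd_le (A : Set ℕ) {t : ℝ} (ht : 0 < t) :
    |∑' k : A, dd t k| ≤ pp t (Nat.floor t) := by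
  set m := Nat.floor t with hm
  have hmle : (m:ℝ) ≤ t := Nat.floor_le ht.le
  have hlt : t < m + 1 := Nat.lt_floor_add_one t
  have hsub : ∑' k : A, dd t k = ∑' k, A.indicator (dd t) k := tsum_subtype A (dd t)
  have hsummable_ind : Summable (A.indicator (dd t)) := (summable_dd t).indicator A
  have hupper : ∑' k : A, dd t k ≤ pp t m := by
    rw [hsub]
    have hgsum := hasSum_tail_ite t m
    have hcomp : ∀ k, A.indicator (dd t) k ≤ (if m + 1 ≤ k then dd t k else 0) := by
      intro k
      by_cases hk : k ∈ A
      · rw [Set.indicator_of_mem hk]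
        split_ifs with h
        · exact le_refl _
        · -- k ≤ m : dd t k ≤ 0
          push_neg at h
          match k, h with
          | 0, h => simp [dd, qq]; exact pp_nonneg ht.le 0
          | (j+1), h =>
            simp only [dd, qq, sub_nonpos]
            apply pp_mono_up ht.le
            have : (j:ℝ) + 1 + 1 ≤ (m:ℝ) + 1 := by
              have : j + 1 + 1 ≤ m + 1 := by omega
              exact_mod_cast this
            linarith
      · rw [Set.indicator_of_notMem hk]
        split_ifs with h
        · match k, h with
          | 0, h => exact absurd h (by omega)
          | (j+1), h =>
            simp only [dd, qq, sub_nonneg]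
            apply pp_mono_down ht.le
            have : (m:ℝ) + 1 ≤ (j:ℝ) + 1 := by
              have : m + 1 ≤ j + 1 := by omega
              exact_mod_cast this
            linarith
        · exact le_refl _
    calc ∑' k, A.indicator (dd t) k ≤ ∑' k, (if m + 1 ≤ k then dd t k else 0) :=
          Summable.tsum_le_tsum hcomp hsummable_ind hgsum.summable
      _ = pp t m := hgsum.tsum_eq
  have hlower : -(pp t m) ≤ ∑' k : A, dd t k := by
    rw [hsub, neg_le, ← tsum_neg]
    have hsummable_negind : Summable (fun k => -(A.indicator (dd t) k)) :=
      hsummable_ind.neg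
    set h : ℕ → ℝ := fun k => if k ≤ m then -(dd t k) else 0 with hh
    have hhsummable : Summable h := by
      apply summable_of_ne_finset_zero (s := Finset.range (m+1))
      intro k hk
      simp only [hh]
      rw [if_neg]
      simp at hk; omega
    have hhsum : ∑' k, h k = pp t m := by
      rw [tsum_eq_sum (s := Finset.range (m+1))]
      · rw [← sum_head t m]
        apply Finset.sum_congr rfl
        intro k hk
        simp only [hh]
        rw [if_pos]
        simp at hk; omega
      · intro k hk
        simp only [hh]
        rw [if_neg]
        simp at hk; omega
    have hcomp : ∀ k, -(A.indicator (dd t) k) ≤ h k := by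
      intro k
      by_cases hk : k ∈ A
      · rw [Set.indicator_of_mem hk]
        simp only [hh]
        split_ifs with hkm
        · exact le_refl _
        · match k, hkm with
          | 0, hkm => exact absurd (Nat.zero_le m) hkm
          | (j+1), hkm =>
            simp only [dd, qq, neg_sub, sub_nonpos]
            apply pp_mono_down ht.le
            have : (m:ℝ) + 1 ≤ (j:ℝ) + 1 := by
              have : m + 1 ≤ j + 1 := by omega
              exact_mod_cast this
            linarith
      · rw [Set.indicator_of_notMem hk]
        simp only [hh, neg_zero]
        split_ifs with hkm
        · match k with
          | 0 =>
            simp only [dd, qq, neg_sub, sub_nonneg, zero_sub, neg_neg]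
            exact pp_nonneg ht.le 0
          | (j+1) =>
            simp only [dd, qq, neg_sub, sub_nonneg]
            apply pp_mono_up ht.le
            have : (j:ℝ) + 1 + 1 ≤ (m:ℝ) + 1 := by
              have : j + 1 + 1 ≤ m + 1 := by omega
              exact_mod_cast this
            linarith
        · exact le_refl _
    calc ∑' k, -(A.indicator (dd t) k) ≤ ∑' k, h k :=
          Summable.tsum_le_tsum hcomp hsummable_negind hhsummable
      _ = pp t m := hhsum
  rw [abs_le]
  exact ⟨hlower, hupper⟩

noncomputable def SS (A : Set ℕ) (t : ℝ) : ℝ := ∑' k : A, pp t k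

lemma summable_pp_sub (A : Set ℕ) (a b : ℝ) :
    Summable (fun k : A => pp b (k:ℕ) - pp a (k:ℕ)) :=
  (((summable_pp b).subtype A)).sub ((summable_pp a).subtype A)

lemma pp_sub_eq_integral (k : ℕ) {a b : ℝ} (hab : a ≤ b) :
    pp b k - pp a k = ∫ t in Set.Ioc a b, dd t k := by
  rw [← intervalIntegral.integral_of_le hab]
  exact (intervalIntegral.integral_eq_sub_of_hasDerivAt (fun t _ => hasDerivAt_pp k t)
    ((continuous_dd k).intervalIntegrable a b)).symm

lemma abs_dd_le {t : ℝ} (ht : 0 ≤ t) (k : ℕ) : |dd t k| ≤ qq t k + pp t k := by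
  have h1 : 0 ≤ qq t k := by
    match k with
    | 0 => simp [qq]
    | (j+1) => exact pp_nonneg ht j
  have h2 : 0 ≤ pp t k := pp_nonneg ht k
  rw [dd, abs_sub_comm, abs_le]
  constructor <;> nlinarith [abs_nonneg (pp t k - qq t k)]

lemma pp_le_bound {t b : ℝ} (ht : 0 ≤ t) (htb : t ≤ b) (k : ℕ) :
    pp t k ≤ b ^ k / (Nat.factorial k : ℝ) := by
  rw [pp]
  have h1 : Real.exp (-t) ≤ 1 := by
    have := Real.exp_le_exp.mpr (neg_nonpos.mpr ht)
    simpa using this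
  have h2 : t ^ k ≤ b ^ k := pow_le_pow_left₀ ht htb k
  have h3 : (0:ℝ) < (Nat.factorial k : ℝ) := by positivity
  rw [div_le_div_iff_of_pos_right h3]
  calc Real.exp (-t) * t ^ k ≤ 1 * t ^ k := by
        apply mul_le_mul_of_nonneg_right h1 (by positivity)
    _ = t ^ k := one_mul _
    _ ≤ b ^ k := h2

lemma qq_le_bound {t b : ℝ} (ht : 0 ≤ t) (htb : t ≤ b) (k : ℕ) :
    qq t k ≤ qq b k * Real.exp b := by
  have hb0 : 0 ≤ b := ht.trans htb
  match k with
  | 0 => simp [qq]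
  | (j+1) =>
    show pp t j ≤ pp b j * Real.exp b
    have heq : pp b j * Real.exp b = b ^ j / (Nat.factorial j : ℝ) := by
      rw [pp, Real.exp_neg]
      field_simp
    rw [heq]
    exact pp_le_bound ht htb j

lemma pp_le_bound' {t b : ℝ} (ht : 0 ≤ t) (htb : t ≤ b) (k : ℕ) :
    pp t k ≤ pp b k * Real.exp b := by
  have heq : pp b k * Real.exp b = b ^ k / (Nat.factorial k : ℝ) := by
    rw [pp, Real.exp_neg]
    field_simp
  rw [heq]
  exact pp_le_bound ht htb k

lemma key (A : Set ℕ) {a b : ℝ} (ha : 0 ≤ a) (hab : a ≤ b) :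
    |SS A b - SS A a| ≤ min (b - a) (Real.sqrt b - Real.sqrt a) := by
  have hb0 : 0 ≤ b := ha.trans hab
  -- the difference as an integral
  have hmeas : ∀ (k : A), AEStronglyMeasurable (fun t => dd t (k:ℕ))
      (volume.restrict (Set.Ioc a b)) := fun k => (continuous_dd (k:ℕ)).aestronglyMeasurable
  have hMM : Summable (fun k => (qq b k + pp b k) * Real.exp b) :=
    ((summable_qq b).add (summable_pp b)).mul_right _
  have hMMnonneg : ∀ k, 0 ≤ (qq b k + pp b k) * Real.exp b := by
    intro k
    have h1 : 0 ≤ qq b k := by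
      match k with
      | 0 => simp [qq]
      | (j+1) => exact pp_nonneg hb0 j
    have := pp_nonneg hb0 k
    positivity
  have hfin : ∑' (k : A), ∫⁻ t in Set.Ioc a b, ‖dd t (k:ℕ)‖₊ ≠ ⊤ := by
    have hbd : ∀ (k : ℕ), ∫⁻ t in Set.Ioc a b, ‖dd t k‖₊
        ≤ ENNReal.ofReal ((qq b k + pp b k) * Real.exp b) * ENNReal.ofReal (b - a) := by
      intro k
      have h1 : ∫⁻ t in Set.Ioc a b, ‖dd t k‖₊
          ≤ ∫⁻ _ in Set.Ioc a b, ENNReal.ofReal ((qq b k + pp b k) * Real.exp b) := by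
        apply lintegral_mono_ae
        rw [ae_restrict_iff' measurableSet_Ioc]
        apply Filter.Eventually.of_forall
        intro t htI
        have ht0 : 0 ≤ t := le_of_lt (lt_of_le_of_lt ha htI.1)
        have h2 : |dd t k| ≤ (qq b k + pp b k) * Real.exp b := by
          calc |dd t k| ≤ qq t k + pp t k := abs_dd_le ht0 k
            _ ≤ (qq b k + pp b k) * Real.exp b := by
              have := qq_le_bound ht0 htI.2 k
              have := pp_le_bound' ht0 htI.2 k
              linarith
        rw [← enorm_eq_nnnorm, Real.enorm_eq_ofReal_abs]
        exact ENNReal.ofReal_le_ofReal h2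
      calc ∫⁻ t in Set.Ioc a b, ‖dd t k‖₊
          ≤ ∫⁻ _ in Set.Ioc a b, ENNReal.ofReal ((qq b k + pp b k) * Real.exp b) := h1
        _ = ENNReal.ofReal ((qq b k + pp b k) * Real.exp b) * ENNReal.ofReal (b - a) := by
            rw [lintegral_const, Measure.restrict_apply_univ, Real.volume_Ioc]
    have hsum : ∑' (k : A), ∫⁻ t in Set.Ioc a b, ‖dd t (k:ℕ)‖₊
        ≤ ∑' (k : ℕ), ENNReal.ofReal ((qq b k + pp b k) * Real.exp b) * ENNReal.ofReal (b - a) := by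
      calc ∑' (k : A), ∫⁻ t in Set.Ioc a b, ‖dd t (k:ℕ)‖₊
          ≤ ∑' (k : A), ENNReal.ofReal ((qq b (k:ℕ) + pp b (k:ℕ)) * Real.exp b)
            * ENNReal.ofReal (b - a) := ENNReal.tsum_le_tsum (fun k => hbd k)
        _ = ∑' (k : ℕ), A.indicator (fun k => ENNReal.ofReal ((qq b k + pp b k) * Real.exp b)
            * ENNReal.ofReal (b - a)) k :=
            tsum_subtype A (fun k => ENNReal.ofReal ((qq b k + pp b k) * Real.exp b)
              * ENNReal.ofReal (b - a))
        _ ≤ ∑' (k : ℕ), ENNReal.ofReal ((qq b k + pp b k) * Real.exp b)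
            * ENNReal.ofReal (b - a) :=
            ENNReal.tsum_le_tsum (fun k => Set.indicator_le_self _ _ k)
    apply ne_top_of_le_ne_top _ hsum
    rw [ENNReal.tsum_mul_right]
    apply ENNReal.mul_ne_top _ ENNReal.ofReal_ne_top
    rw [← ENNReal.ofReal_tsum_of_nonneg hMMnonneg hMM]
    exact ENNReal.ofReal_ne_top
  have hswap := MeasureTheory.integral_tsum (μ := volume.restrict (Set.Ioc a b))
      (f := fun (k : A) (t : ℝ) => dd t (k:ℕ)) hmeas hfin
  have hdiff : SS A b - SS A a = ∫ t in Set.Ioc a b, (∑' k : A, dd t k) := by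
    have h1 : Summable (fun k : A => pp b (k:ℕ)) := (summable_pp b).subtype A
    have h2 : Summable (fun k : A => pp a (k:ℕ)) := (summable_pp a).subtype A
    rw [SS, SS, ← Summable.tsum_sub h1 h2]
    calc ∑' (k : A), (pp b (k:ℕ) - pp a (k:ℕ))
        = ∑' (k : A), ∫ t in Set.Ioc a b, dd t (k:ℕ) :=
          tsum_congr (fun k => pp_sub_eq_integral (k:ℕ) hab)
      _ = ∫ t in Set.Ioc a b, (∑' k : A, dd t k) := by
          simpa using hswap.symm
  rw [hdiff]
  -- pointwise bounds
  have hbd1 : ∀ t ∈ Set.Ioc a b, ‖∑' k : A, dd t k‖ ≤ (1:ℝ) := by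
    intro t htI
    have ht0 : 0 < t := lt_of_le_of_lt ha htI.1
    rw [Real.norm_eq_abs]
    calc |∑' k : A, dd t k| ≤ pp t (Nat.floor t) := abs_tsum_dd_le A ht0
      _ ≤ 1 := pp_le_one ht0.le _
  have hbd2 : ∀ t ∈ Set.Ioc a b, ‖∑' k : A, dd t k‖ ≤ t ^ (-(1/2) : ℝ) / 2 := by
    intro t htI
    have ht0 : 0 < t := lt_of_le_of_lt ha htI.1
    rw [Real.norm_eq_abs]
    calc |∑' k : A, dd t k| ≤ pp t (Nat.floor t) := abs_tsum_dd_le A ht0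
      _ ≤ 1 / (2 * Real.sqrt t) := pp_floor_le ht0
      _ = t ^ (-(1/2) : ℝ) / 2 := by
          rw [Real.rpow_neg ht0.le, ← Real.sqrt_eq_rpow]
          rw [eq_div_iff (by norm_num)]
          have hsp : Real.sqrt t ≠ 0 := (Real.sqrt_pos.mpr ht0).ne'
          field_simp
  apply le_min
  · -- bound by b - a
    have h1 := MeasureTheory.norm_integral_le_of_norm_le
      (f := fun t => ∑' k : A, dd t k) (g := fun _ => (1:ℝ))
      (μ := volume.restrict (Set.Ioc a b))
      ((integrableOn_const_iff (C := (1:ℝ))).mpr (Or.inr (by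
        rw [Real.volume_Ioc]; exact ENNReal.ofReal_lt_top)))
      (by
        rw [ae_restrict_iff' measurableSet_Ioc]
        exact Filter.Eventually.of_forall hbd1)
    rw [Real.norm_eq_abs] at h1
    calc |∫ t in Set.Ioc a b, (∑' k : A, dd t k)| ≤ ∫ _ in Set.Ioc a b, (1:ℝ) := h1
      _ = b - a := by
          rw [setIntegral_const, measureReal_def, Real.volume_Ioc, smul_eq_mul, mul_one,
            ENNReal.toReal_ofReal (by linarith)]
  · -- bound by √b - √a
    have hint : IntegrableOn (fun t => t ^ (-(1/2) : ℝ) / 2) (Set.Ioc a b) volume := by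
      have h2 : IntervalIntegrable (fun t : ℝ => t ^ (-(1/2) : ℝ)) volume a b :=
        intervalIntegral.intervalIntegrable_rpow' (by norm_num)
      have h3 := (intervalIntegrable_iff_integrableOn_Ioc_of_le hab).mp h2
      exact h3.div_const 2
    have h1 := MeasureTheory.norm_integral_le_of_norm_le
      (f := fun t => ∑' k : A, dd t k) (g := fun t => t ^ (-(1/2) : ℝ) / 2)
      (μ := volume.restrict (Set.Ioc a b)) hint
      (by
        rw [ae_restrict_iff' measurableSet_Ioc]
        exact Filter.Eventually.of_forall hbd2)
    rw [Real.norm_eq_abs] at h1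
    calc |∫ t in Set.Ioc a b, (∑' k : A, dd t k)|
        ≤ ∫ t in Set.Ioc a b, t ^ (-(1/2) : ℝ) / 2 := h1
      _ = Real.sqrt b - Real.sqrt a := by
          rw [← intervalIntegral.integral_of_le hab]
          rw [intervalIntegral.integral_div]
          rw [_root_.integral_rpow (Or.inl (by norm_num))]
          rw [Real.sqrt_eq_rpow, Real.sqrt_eq_rpow]
          norm_num
          ring

lemma pw (A : Set ℕ) {μ lam : ℝ} (hμ : 0 ≤ μ) (hl : 0 < lam) :
    |SS A μ - SS A lam| ≤ min 1 (1 / Real.sqrt lam) * |μ - lam| := by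
  have hsl : 0 < Real.sqrt lam := Real.sqrt_pos.mpr hl
  have hμs := Real.sq_sqrt hμ
  have hls := Real.sq_sqrt hl.le
  rcases le_total μ lam with h | h
  · have hk := key A hμ h
    rw [abs_sub_comm]
    have habs : |μ - lam| = lam - μ := by
      rw [abs_sub_comm]; exact abs_of_nonneg (by linarith)
    rw [habs]
    have h2 : Real.sqrt lam - Real.sqrt μ ≤ (1/Real.sqrt lam) * (lam - μ) := by
      rw [div_mul_eq_mul_div, one_mul, le_div_iff₀ hsl]
      have hmono : Real.sqrt μ ≤ Real.sqrt lam := Real.sqrt_le_sqrt h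
      nlinarith [Real.sqrt_nonneg μ]
    calc |SS A lam - SS A μ| ≤ min (lam - μ) (Real.sqrt lam - Real.sqrt μ) := hk
      _ ≤ min (1 * (lam - μ)) ((1/Real.sqrt lam) * (lam - μ)) := by
          apply le_min
          · rw [one_mul]; exact min_le_left _ _
          · exact (min_le_right _ _).trans h2
      _ = min 1 (1/Real.sqrt lam) * (lam - μ) := (min_mul_of_nonneg _ _ (by linarith)).symm
  · have hk := key A hl.le h
    have habs : |μ - lam| = μ - lam := abs_of_nonneg (by linarith)
    rw [habs]
    have h2 : Real.sqrt μ - Real.sqrt lam ≤ (1/Real.sqrt lam) * (μ - lam) := by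
      rw [div_mul_eq_mul_div, one_mul, le_div_iff₀ hsl]
      have hmono : Real.sqrt lam ≤ Real.sqrt μ := Real.sqrt_le_sqrt h
      nlinarith [Real.sqrt_nonneg μ]
    calc |SS A μ - SS A lam| ≤ min (μ - lam) (Real.sqrt μ - Real.sqrt lam) := hk
      _ ≤ min (1 * (μ - lam)) ((1/Real.sqrt lam) * (μ - lam)) := by
          apply le_min
          · rw [one_mul]; exact min_le_left _ _
          · exact (min_le_right _ _).trans h2
      _ = min 1 (1/Real.sqrt lam) * (μ - lam) := (min_mul_of_nonneg _ _ (by linarith)).symm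

lemma measurable_SS (A : Set ℕ) : Measurable (SS A) := by
  classical
  have htend : ∀ t, Filter.Tendsto
      (fun n => ∑ k ∈ Finset.range n, A.indicator (fun j => pp t j) k)
      Filter.atTop (nhds (SS A t)) := by
    intro t
    have hsum : Summable (A.indicator (fun j => pp t j)) := (summable_pp t).indicator A
    have h1 := hsum.hasSum.tendsto_sum_nat
    rw [SS, tsum_subtype]
    exact h1
  apply measurable_of_tendsto_metrizable (fun n => ?_) (tendsto_pi_nhds.mpr htend)
  apply Finset.measurable_sum
  intro k _
  simp only [Set.indicator_apply]
  split_ifs with hk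
  · exact (continuous_pp k).measurable
  · exact measurable_const

lemma abs_SS_le_one (A : Set ℕ) {t : ℝ} (ht : 0 ≤ t) : |SS A t| ≤ 1 := by
  have h0 : 0 ≤ SS A t := tsum_nonneg (fun k => pp_nonneg ht (k:ℕ))
  have h1 : SS A t ≤ 1 := by
    rw [SS, tsum_subtype]
    calc ∑' k, A.indicator (fun j => pp t j) k ≤ ∑' k, pp t k :=
          Summable.tsum_le_tsum (fun k => Set.indicator_le_self' (fun j _ => pp_nonneg ht j) k)
            ((summable_pp t).indicator A) (summable_pp t)
      _ = 1 := (hasSum_pp ht).tsum_eq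
  rw [abs_le]
  exact ⟨by linarith, h1⟩

end MixedPoissonTV

open MixedPoissonTV

theorem mixed_poisson_tv_bound {Ω : Type*} [MeasureSpace Ω]
    [IsProbabilityMeasure (ℙ : Measure Ω)]
    (Λ : Ω → ℝ) (hΛmeas : Measurable Λ) (hΛnonneg : ∀ᵐ ω ∂ℙ, 0 ≤ Λ ω)
    (hΛint : Integrable Λ (ℙ : Measure Ω))
    (lam : ℝ) (hlam : 0 < lam) (A : Set ℕ) :
    |(∑' k : A, ∫ ω, Real.exp (-Λ ω) * Λ ω ^ (k : ℕ) / (Nat.factorial (k : ℕ) : ℝ))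
        - ∑' k : A, Real.exp (-lam) * lam ^ (k : ℕ) / (Nat.factorial (k : ℕ) : ℝ)|
      ≤ min 1 (1 / Real.sqrt lam) * ∫ ω, |Λ ω - lam| := by
  classical
  have hL1 : (∑' k : A, ∫ ω, Real.exp (-Λ ω) * Λ ω ^ (k : ℕ) / (Nat.factorial (k : ℕ) : ℝ))
      = ∑' k : A, ∫ ω, pp (Λ ω) (k : ℕ) := rfl
  have hL2 : (∑' k : A, Real.exp (-lam) * lam ^ (k : ℕ) / (Nat.factorial (k : ℕ) : ℝ))
      = SS A lam := rfl
  rw [hL1, hL2]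
  -- swap the sum and the integral
  have hmeask : ∀ (k : A), AEStronglyMeasurable (fun ω => pp (Λ ω) (k : ℕ)) ℙ :=
    fun k => ((continuous_pp (k : ℕ)).measurable.comp hΛmeas).aestronglyMeasurable
  have hfin : ∑' (k : A), ∫⁻ ω, ‖pp (Λ ω) (k : ℕ)‖₊ ∂ℙ ≠ ⊤ := by
    have hle : ∑' (k : A), ∫⁻ ω, ‖pp (Λ ω) (k : ℕ)‖₊ ∂ℙ
        ≤ ∑' (k : ℕ), ∫⁻ ω, ‖pp (Λ ω) k‖₊ ∂ℙ := by
      calc ∑' (k : A), ∫⁻ ω, ‖pp (Λ ω) (k : ℕ)‖₊ ∂ℙ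
          = ∑' (k : ℕ), A.indicator (fun k => ∫⁻ ω, ‖pp (Λ ω) k‖₊ ∂ℙ) k :=
            tsum_subtype A (fun k => ∫⁻ ω, ‖pp (Λ ω) k‖₊ ∂ℙ)
        _ ≤ ∑' (k : ℕ), ∫⁻ ω, ‖pp (Λ ω) k‖₊ ∂ℙ :=
            ENNReal.tsum_le_tsum (fun k => Set.indicator_le_self _ _ k)
    have heq : ∑' (k : ℕ), ∫⁻ ω, ‖pp (Λ ω) k‖₊ ∂ℙ = ∫⁻ ω, ∑' (k : ℕ), ‖pp (Λ ω) k‖₊ ∂ℙ :=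
      (lintegral_tsum (fun k =>
        (((continuous_pp k).measurable.comp hΛmeas).enorm).aemeasurable)).symm
    have hb : ∫⁻ ω, ∑' (k : ℕ), (‖pp (Λ ω) k‖₊ : ENNReal) ∂ℙ ≤ 1 := by
      have hone : ∀ᵐ ω ∂ℙ, ∑' (k : ℕ), (‖pp (Λ ω) k‖₊ : ENNReal) = 1 := by
        filter_upwards [hΛnonneg] with ω hω
        have : ∀ k, (‖pp (Λ ω) k‖₊ : ENNReal) = ENNReal.ofReal (pp (Λ ω) k) := fun k =>
          Real.enorm_eq_ofReal (pp_nonneg hω k)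
        simp_rw [this]
        rw [← ENNReal.ofReal_tsum_of_nonneg (fun k => pp_nonneg hω k) (summable_pp _)]
        rw [(hasSum_pp hω).tsum_eq]
        simp
      rw [lintegral_congr_ae hone]
      simp
    exact ne_top_of_le_ne_top ENNReal.one_ne_top (hle.trans (heq.trans_le hb))
  have hswap := MeasureTheory.integral_tsum
      (f := fun (k : A) (ω : Ω) => pp (Λ ω) (k : ℕ)) hmeask hfin
  have hSint : Integrable (fun ω => SS A (Λ ω)) ℙ := by
    apply Integrable.mono' (integrable_const (1:ℝ))
      (((measurable_SS A).comp hΛmeas).aestronglyMeasurable)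
    filter_upwards [hΛnonneg] with ω hω
    rw [Real.norm_eq_abs]
    exact abs_SS_le_one A hω
  have hrw : (∑' k : A, ∫ ω, pp (Λ ω) (k : ℕ)) - SS A lam
      = ∫ ω, (SS A (Λ ω) - SS A lam) ∂ℙ := by
    rw [integral_sub hSint (integrable_const _)]
    congr 1
    · have := hswap.symm
      simpa [SS] using this
    · rw [integral_const]
      simp
  rw [hrw]
  have hgint : Integrable (fun ω => min 1 (1 / Real.sqrt lam) * |Λ ω - lam|) ℙ :=
    ((hΛint.sub (integrable_const lam)).abs.const_mul _)
  have hbound := MeasureTheory.norm_integral_le_of_norm_le (μ := (ℙ : Measure Ω))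
      (f := fun ω => SS A (Λ ω) - SS A lam)
      (g := fun ω => min 1 (1 / Real.sqrt lam) * |Λ ω - lam|) hgint
      (by
        filter_upwards [hΛnonneg] with ω hω
        rw [Real.norm_eq_abs]
        exact pw A hω hlam)
  rw [Real.norm_eq_abs] at hbound
  calc |∫ ω, (SS A (Λ ω) - SS A lam) ∂ℙ|
      ≤ ∫ ω, min 1 (1 / Real.sqrt lam) * |Λ ω - lam| ∂ℙ := hbound
    _ = min 1 (1 / Real.sqrt lam) * ∫ ω, |Λ ω - lam| := by
        rw [MeasureTheory.integral_const_mul]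
end

section
/- There exists a constant C such that for all n ≥ 1, sup over x ∈ ℝ of |P(n² m_n^D ≥ x) − e^{−x}| ≤ C/n, where m_n^D is the minimum uniform spacing with survival function P(m_n^D ≥ x) = (1 − (n+1)x)^n on [0, 1/(n+1)]. -/
lemma aux_pow_sub (a b : ℝ) (ha : 0 ≤ a) (hab : a ≤ b) :
    ∀ n : ℕ, b ^ (n + 1) - a ^ (n + 1) ≤ ((n : ℝ) + 1) * (b - a) * b ^ n := by
  intro n
  induction n with
  | zero => simp
  | succ m ih =>
    have hb : 0 ≤ b := ha.trans hab
    have hpow : a ^ (m + 1) ≤ b ^ (m + 1) := pow_le_pow_left₀ ha hab _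
    have key : b ^ (m + 2) - a ^ (m + 2)
        = b * (b ^ (m + 1) - a ^ (m + 1)) + (b - a) * a ^ (m + 1) := by ring
    have h1 : b * (b ^ (m + 1) - a ^ (m + 1)) ≤ b * (((m : ℝ) + 1) * (b - a) * b ^ m) :=
      mul_le_mul_of_nonneg_left ih hb
    have h2 : (b - a) * a ^ (m + 1) ≤ (b - a) * b ^ (m + 1) :=
      mul_le_mul_of_nonneg_left hpow (by linarith)
    have h3 : b * (((m : ℝ) + 1) * (b - a) * b ^ m) + (b - a) * b ^ (m + 1)
        = (((m + 1 : ℕ) : ℝ) + 1) * (b - a) * b ^ (m + 1) := by push_cast; ring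
    calc b ^ (m + 2) - a ^ (m + 2)
        = b * (b ^ (m + 1) - a ^ (m + 1)) + (b - a) * a ^ (m + 1) := key
      _ ≤ b * (((m : ℝ) + 1) * (b - a) * b ^ m) + (b - a) * b ^ (m + 1) := by linarith
      _ = (((m + 1 : ℕ) : ℝ) + 1) * (b - a) * b ^ (m + 1) := h3

lemma aux_sup (x : ℝ) (hx : 0 ≤ x) : (x ^ 2 + x) * Real.exp (-x / 2) ≤ 10 := by
  have hx2 : (0:ℝ) ≤ x / 2 := by linarith
  have h := Real.sum_le_exp_of_nonneg hx2 4
  norm_num [Finset.sum_range_succ, Nat.factorial] at h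
  have hpos : 0 < Real.exp (x / 2) := Real.exp_pos _
  have hkey : x ^ 2 + x ≤ 10 * Real.exp (x / 2) := by nlinarith
  have hinv : Real.exp (-x / 2) = (Real.exp (x / 2))⁻¹ := by
    rw [← Real.exp_neg]; ring_nf
  rw [hinv, mul_inv_le_iff₀ hpos]
  linarith

set_option maxHeartbeats 1000000 in
theorem dirichlet_min_spacing_exponential_rate :
    ∃ C : ℝ, ∀ n : ℕ, 1 ≤ n → ∀ x : ℝ,
      |(if x < 0 then (1 : ℝ)
          else if x / (n : ℝ) ^ 2 ≤ 1 / ((n : ℝ) + 1)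
            then (1 - ((n : ℝ) + 1) * (x / (n : ℝ) ^ 2)) ^ n else 0)
        - (if x < 0 then 1 else Real.exp (-x))| ≤ C / n := by
  refine ⟨10, fun n hn x => ?_⟩
  have hn0 : (0:ℝ) < n := by exact_mod_cast hn
  by_cases hx : x < 0
  · rw [if_pos hx, if_pos hx]
    simp only [sub_self, abs_zero]
    positivity
  · push_neg at hx
    rw [if_neg (not_lt.mpr hx), if_neg (not_lt.mpr hx)]
    by_cases hcase : x / (n : ℝ) ^ 2 ≤ 1 / ((n : ℝ) + 1)
    · rw [if_pos hcase]
      have ha0 : 0 ≤ 1 - ((n : ℝ) + 1) * (x / (n : ℝ) ^ 2) := by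
        have h1 : ((n : ℝ) + 1) * (x / (n : ℝ) ^ 2) ≤ ((n : ℝ) + 1) * (1 / ((n : ℝ) + 1)) :=
          mul_le_mul_of_nonneg_left hcase (by positivity)
        have h2 : ((n : ℝ) + 1) * (1 / ((n : ℝ) + 1)) = 1 := by field_simp
        linarith
      set a : ℝ := 1 - ((n : ℝ) + 1) * (x / (n : ℝ) ^ 2) with ha_def
      set b : ℝ := Real.exp (-(x / (n : ℝ))) with hb_def
      have heq : ((n : ℝ) + 1) * (x / (n : ℝ) ^ 2) = x / n + x / (n : ℝ) ^ 2 := by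
        field_simp
      have hab : a ≤ b := by
        have h1 : -(x / (n : ℝ)) + 1 ≤ b := Real.add_one_le_exp _
        have h2 : 0 ≤ x / (n : ℝ) ^ 2 := by positivity
        rw [ha_def, heq]; linarith
      have hbn : b ^ n = Real.exp (-x) := by
        rw [hb_def, ← Real.exp_nat_mul]
        congr 1
        field_simp
      have hanbn : a ^ n ≤ b ^ n := pow_le_pow_left₀ ha0 hab n
      have habs : |a ^ n - Real.exp (-x)| = b ^ n - a ^ n := by
        rw [← hbn, abs_sub_comm, abs_of_nonneg (sub_nonneg.mpr hanbn)]
      rw [habs]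
      have hu0 : 0 ≤ x / (n : ℝ) := by positivity
      have hb1 : b ≤ 1 := Real.exp_le_one_iff.mpr (by linarith)
      by_cases hn1 : n = 1
      · subst hn1
        have han : (0:ℝ) ≤ a := ha0
        have hbn1 : b ≤ 1 := hb1
        simp only [pow_one]
        norm_num
        linarith
      · have hn2 : 2 ≤ n := by omega
        obtain ⟨m, rfl⟩ : ∃ m, n = m + 1 := ⟨n - 1, by omega⟩
        have hm1 : 1 ≤ m := by omega
        have hm1' : (1:ℝ) ≤ (m : ℝ) := by exact_mod_cast hm1
        have hcast : ((m + 1 : ℕ) : ℝ) = (m : ℝ) + 1 := by push_cast; ring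
        set N : ℝ := ((m + 1 : ℕ) : ℝ) with hN_def
        have hNpos : 0 < N := hn0
        have hNm : N = (m : ℝ) + 1 := by rw [hN_def]; push_cast; ring
        have hNne : (m : ℝ) + 1 ≠ 0 := by positivity
        -- b ≤ 1 - x/N + (x/N)^2
        have hexpinv : b ≤ 1 - x / N + (x / N) ^ 2 := by
          set u : ℝ := x / N with hu_def
          have he : u + 1 ≤ Real.exp u := Real.add_one_le_exp u
          have hep : 0 < Real.exp u := Real.exp_pos u
          have h1 : 0 ≤ 1 - u + u ^ 2 := by nlinarith [sq_nonneg (2 * u - 1)]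
          have h2 : (1 - u + u ^ 2) * (u + 1) ≤ (1 - u + u ^ 2) * Real.exp u :=
            mul_le_mul_of_nonneg_left he h1
          have key : 1 ≤ (1 - u + u ^ 2) * Real.exp u := by
            nlinarith [pow_nonneg hu0 3]
          have hbinv : b = (Real.exp u)⁻¹ := by rw [hb_def, ← Real.exp_neg]
          rw [hbinv, inv_le_iff_one_le_mul₀' hep]
          linarith
        -- b - a ≤ (x^2 + x)/N^2
        have hba : b - a ≤ (x ^ 2 + x) / N ^ 2 := by
          have hux : (x / N) ^ 2 = x ^ 2 / N ^ 2 := div_pow x N 2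
          have hsplit : (x ^ 2 + x) / N ^ 2 = x ^ 2 / N ^ 2 + x / N ^ 2 := by ring
          rw [ha_def, heq, hsplit]
          linarith [hexpinv, hux]
        -- b ^ m ≤ exp (-x/2)
        have hbm : b ^ m ≤ Real.exp (-x / 2) := by
          rw [hb_def, ← Real.exp_nat_mul]
          apply Real.exp_le_exp.mpr
          push_cast
          rw [hNm]
          have hnum : 0 ≤ x * ((m : ℝ) - 1) := mul_nonneg hx (by linarith)
          have hden : (0:ℝ) < 2 * ((m : ℝ) + 1) := by positivity
          have hdd : 0 ≤ x * ((m : ℝ) - 1) / (2 * ((m : ℝ) + 1)) := div_nonneg hnum hden.le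
          have hid : (m : ℝ) * -(x / ((m : ℝ) + 1)) + x * ((m : ℝ) - 1) / (2 * ((m : ℝ) + 1))
              = -x / 2 := by field_simp; ring
          linarith
        -- combine
        have hmain := aux_pow_sub a b ha0 hab m
        have hbpos : (0:ℝ) ≤ b := (Real.exp_pos _).le
        have hba0 : 0 ≤ b - a := sub_nonneg.mpr hab
        have hbm0 : 0 ≤ b ^ m := pow_nonneg hbpos m
        have hxx : 0 ≤ (x ^ 2 + x) / N ^ 2 := div_nonneg (by nlinarith) (by positivity)
        have step : ((m : ℝ) + 1) * (b - a) * b ^ m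
            ≤ ((m : ℝ) + 1) * ((x ^ 2 + x) / N ^ 2) * Real.exp (-x / 2) := by
          have t1 : ((m : ℝ) + 1) * (b - a) ≤ ((m : ℝ) + 1) * ((x ^ 2 + x) / N ^ 2) :=
            mul_le_mul_of_nonneg_left hba (by positivity)
          exact mul_le_mul t1 hbm hbm0 (by positivity)
        have hident : ((m : ℝ) + 1) * ((x ^ 2 + x) / N ^ 2) * Real.exp (-x / 2)
            = (x ^ 2 + x) * Real.exp (-x / 2) / N := by
          rw [hNm]
          field_simp
        have hfin : (x ^ 2 + x) * Real.exp (-x / 2) / N ≤ 10 / N := by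
          gcongr
          exact aux_sup x hx
        calc b ^ (m + 1) - a ^ (m + 1) ≤ ((m : ℝ) + 1) * (b - a) * b ^ m := hmain
          _ ≤ ((m : ℝ) + 1) * ((x ^ 2 + x) / N ^ 2) * Real.exp (-x / 2) := step
          _ = (x ^ 2 + x) * Real.exp (-x / 2) / N := hident
          _ ≤ 10 / N := hfin
    · rw [if_neg hcase]
      push_neg at hcase
      have hxn : (n : ℝ) / 2 ≤ x := by
        have h1 : (n : ℝ) ^ 2 / ((n : ℝ) + 1) < x := by
          rw [div_lt_iff₀ (by positivity)]
          rw [div_lt_div_iff₀ (by positivity) (by positivity)] at hcase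
          linarith
        have h2 : (n : ℝ) / 2 ≤ (n : ℝ) ^ 2 / ((n : ℝ) + 1) := by
          rw [div_le_div_iff₀ (by norm_num) (by positivity)]
          have h3 : (1:ℝ) ≤ n := by exact_mod_cast hn
          nlinarith
        linarith
      have hex : Real.exp (-x) ≤ 2 / n := by
        have h1 : Real.exp (-x) ≤ Real.exp (-((n:ℝ)/2)) := Real.exp_le_exp.mpr (by linarith)
        have h2 : (n:ℝ)/2 + 1 ≤ Real.exp ((n:ℝ)/2) := Real.add_one_le_exp _
        have h3 : Real.exp (-((n:ℝ)/2)) = (Real.exp ((n:ℝ)/2))⁻¹ := Real.exp_neg _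
        have hh : (0:ℝ) < (n:ℝ)/2 := by positivity
        have h4 : (Real.exp ((n:ℝ)/2))⁻¹ ≤ ((n:ℝ)/2)⁻¹ :=
          inv_anti₀ hh (by linarith)
        have h5 : ((n:ℝ)/2)⁻¹ = 2 / n := by field_simp
        rw [h3] at h1
        rw [h5] at h4
        linarith
      have hep : 0 < Real.exp (-x) := Real.exp_pos _
      rw [zero_sub, abs_neg, abs_of_pos hep]
      have h6 : 2 / (n:ℝ) ≤ 10 / n := by gcongr <;> norm_num
      linarith
end
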